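/- For all words u, v, w over a nonempty finite alphabet A, if w is an interleaving (shuffle) of u and v, then h(w) ≤ h(u) + |v|, where |v| is the length of v. -/

import Mathlib

/-- Simon's congruence of order `k`: `u` and `v` have the same subwords
(subsequences) of length at most `k`. -/
def SimonCong {A : Type*} (k : ℕ) (u v : List A) : Prop :=
  ∀ s : List A, s.length ≤ k → (s.Sublist u ↔ s.Sublist v)

/-- The subword distance `δ(u,v) = sup {k | u ∼ₖ v} ∈ ℕ ∪ {∞}`. -/
noncomputable def delta {A : Type*} (u v : List A) : ℕ∞ :=
  ⨆ k ∈ {k : ℕ | SimonCong k u v}, (k : ℕ∞)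

/-- Right side distance `r(u,t) = δ(u, u·t)`. -/
noncomputable def sideR {A : Type*} (u t : List A) : ℕ∞ :=
  delta u (u ++ t)

/-- Left side distance `ℓ(t,u) = δ(t·u, u)`. -/
noncomputable def sideL {A : Type*} (t u : List A) : ℕ∞ :=
  delta (t ++ u) u

/-- The piecewise complexity `h(u)`: the least `n` such that every word
`v` with `u ∼ₙ v` equals `u`. -/
noncomputable def pieceH {A : Type*} (u : List A) : ℕ :=
  sInf {n : ℕ | ∀ v : List A, SimonCong n u v → v = u}

/-- A word `u` is `m`-reduced if no strict subword of `u` is `∼ₘ`-equivalent to `u`. -/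
def MReduced {A : Type*} (m : ℕ) (u : List A) : Prop :=
  ∀ u' : List A, u'.Sublist u → u' ≠ u → ¬ SimonCong m u' u

/-- The piecewise minimality index `ρ(u)`: the least `m` such that `u` is `m`-reduced. -/
noncomputable def rho {A : Type*} (u : List A) : ℕ :=
  sInf {m : ℕ | MReduced m u}

/-- `IsShuffle u v w` holds when `w` is an interleaving (shuffle) of `u` and `v`. -/
inductive IsShuffle {A : Type*} : List A → List A → List A → Prop
  | nil : IsShuffle [] [] []
  | left (a : A) {u v w : List A} : IsShuffle u v w → IsShuffle (a :: u) v (a :: w)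
  | right (a : A) {u v w : List A} : IsShuffle u v w → IsShuffle u (a :: v) (a :: w)

namespace SW
open List
variable {A : Type*}

theorem sc_refl (k : ℕ) (u : List A) : SimonCong k u u := fun _ _ => Iff.rfl

theorem sc_symm {k : ℕ} {u v : List A} (h : SimonCong k u v) : SimonCong k v u :=
  fun s hs => (h s hs).symm

theorem sc_mono {k m : ℕ} {u v : List A} (h : SimonCong m u v) (hk : k ≤ m) :
    SimonCong k u v := fun s hs => h s (hs.trans hk)

theorem sc_transfer {k : ℕ} {u v s : List A} (h : SimonCong k u v) (hs : s.length ≤ k)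
    (hsu : s <+ u) : s <+ v := (h s hs).mp hsu

/-- suffix after the first occurrence of `e`. -/
noncomputable def sufE (e : A) : List A → List A
  | [] => []
  | a :: l => by classical exact if a = e then l else sufE e l

@[simp] theorem sufE_nil (e : A) : sufE e ([] : List A) = [] := rfl

theorem sufE_cons_self (e : A) (l : List A) : sufE e (e :: l) = l := by
  simp [sufE]

theorem sufE_cons_ne (e a : A) (l : List A) (h : a ≠ e) : sufE e (a :: l) = sufE e l := by
  simp [sufE, h]

theorem sufE_append_of_mem (e : A) {l : List A} (r : List A) (h : e ∈ l) :
    sufE e (l ++ r) = sufE e l ++ r := by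
  induction l with
  | nil => simp at h
  | cons a l ih =>
    by_cases hae : a = e
    · subst hae; simp [sufE_cons_self]
    · rw [cons_append, sufE_cons_ne _ _ _ hae, sufE_cons_ne _ _ _ hae]
      refine ih ?_
      rcases mem_cons.mp h with h | h
      exacts [absurd h.symm hae, h]

theorem sufE_append_of_not_mem (e : A) {l : List A} (r : List A) (h : e ∉ l) :
    sufE e (l ++ r) = sufE e r := by
  induction l with
  | nil => simp
  | cons a l ih =>
    rw [cons_append, sufE_cons_ne _ _ _ (fun hae => h (by rw [hae]; exact mem_cons_self))]
    exact ih (fun hl => h (mem_cons_of_mem a hl))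

theorem sufE_length_lt {e : A} {l : List A} (h : e ∈ l) : (sufE e l).length < l.length := by
  induction l with
  | nil => simp at h
  | cons a l ih =>
    by_cases hae : a = e
    · subst hae; rw [sufE_cons_self]; simp
    · rw [sufE_cons_ne _ _ _ hae]
      have : e ∈ l := by
        rcases mem_cons.mp h with h | h
        exacts [absurd h.symm hae, h]
      exact (ih this).trans (by simp)

theorem sufE_sublist (e : A) (l : List A) : sufE e l <+ l := by
  induction l with
  | nil => simp
  | cons a l ih =>
    by_cases hae : a = e
    · subst hae; rw [sufE_cons_self]; exact (sublist_cons_self a l)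
    · rw [sufE_cons_ne _ _ _ hae]; exact ih.trans (sublist_cons_self a l)

/-- first occurrence characterization -/
theorem cons_sublist_iff_sufE {e : A} {s u : List A} :
    (e :: s) <+ u ↔ e ∈ u ∧ s <+ sufE e u := by
  induction u with
  | nil => simp
  | cons a l ih =>
    by_cases hae : a = e
    · subst hae
      rw [sufE_cons_self]
      constructor
      · intro h
        exact ⟨mem_cons_self, (cons_sublist_cons.mp h)⟩
      · intro ⟨_, hs⟩; exact cons_sublist_cons.mpr hs
    · rw [sufE_cons_ne _ _ _ hae]
      constructor
      · intro h
        rcases sublist_cons_iff.mp h with h | ⟨r, hr, hrl⟩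
        · rcases ih.mp h with ⟨h1, h2⟩; exact ⟨mem_cons_of_mem a h1, h2⟩
        · cases hr; exact absurd rfl (Ne.symm hae)
      · intro ⟨hm, hs⟩
        have hm' : e ∈ l := by
          rcases mem_cons.mp hm with h | h
          exacts [absurd h.symm hae, h]
        exact (ih.mpr ⟨hm', hs⟩).trans (sublist_cons_self a l)

theorem mem_of_sc {k : ℕ} {u v : List A} (h : SimonCong (k+1) u v) {e : A} (he : e ∈ u) : e ∈ v := by
  have : [e] <+ u := by
    rw [cons_sublist_iff_sufE]; exact ⟨he, nil_sublist _⟩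
  have := sc_transfer h (by simp) this
  rw [cons_sublist_iff_sufE] at this; exact this.1

/-- (★) the recursive characterization -/
theorem star {k : ℕ} {u v : List A} :
    SimonCong (k+1) u v ↔
      (∀ e : A, e ∈ u ↔ e ∈ v) ∧ (∀ e : A, e ∈ u → SimonCong k (sufE e u) (sufE e v)) := by
  constructor
  · intro h
    refine ⟨fun e => ⟨fun he => mem_of_sc h he, fun he => mem_of_sc (sc_symm h) he⟩, ?_⟩
    intro e he s hs
    constructor
    · intro hsu
      have : (e :: s) <+ u := cons_sublist_iff_sufE.mpr ⟨he, hsu⟩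
      have := sc_transfer h (by simpa using Nat.succ_le_succ hs) this
      exact (cons_sublist_iff_sufE.mp this).2
    · intro hsv
      have : (e :: s) <+ v := cons_sublist_iff_sufE.mpr ⟨mem_of_sc h he, hsv⟩
      have := sc_transfer (sc_symm h) (by simpa using Nat.succ_le_succ hs) this
      exact (cons_sublist_iff_sufE.mp this).2
  · intro ⟨hal, hsuf⟩ s hs
    match s, hs with
    | [], _ => simp
    | e :: t, hs =>
      simp only [length_cons, Nat.succ_le_succ_iff] at hs
      constructor
      · intro h
        rcases cons_sublist_iff_sufE.mp h with ⟨he, ht⟩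
        exact cons_sublist_iff_sufE.mpr ⟨(hal e).mp he, ((hsuf e he) t hs).mp ht⟩
      · intro h
        rcases cons_sublist_iff_sufE.mp h with ⟨he, ht⟩
        have heu : e ∈ u := (hal e).mpr he
        exact cons_sublist_iff_sufE.mpr ⟨heu, ((hsuf e heu) t hs).mpr ht⟩


theorem sc_zero (u v : List A) : SimonCong 0 u v := by
  intro s hs
  have : s = [] := List.eq_nil_of_length_eq_zero (Nat.le_zero.mp hs)
  subst this; simp

/-- helper: from [b,a] <+ L ++ b :: R, get a ∈ L ∨ a ∈ R -/
theorem pair_mem {a b : A} {L R : List A} (h : [b, a] <+ L ++ b :: R) : a ∈ L ∨ a ∈ R := by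
  rcases sublist_append_iff.mp h with ⟨l₁, l₂, heq, h1, h2⟩
  match l₁, l₂, heq with
  | [], [b', a'], heq =>
    cases heq
    rcases sublist_cons_iff.mp h2 with h2 | ⟨r, hr, hrR⟩
    · exact Or.inr (h2.subset (by simp))
    · cases hr
      exact Or.inr (hrR.subset (by simp))
  | [b'], [a'], heq =>
    obtain ⟨rfl, rfl⟩ : b = b' ∧ a = a' := by simpa using heq
    rcases sublist_cons_iff.mp h2 with h2 | ⟨r, hr, hrR⟩
    · exact Or.inr (h2.subset (by simp))
    · -- [a] = b :: r, so a = b, and [b,a]=[a,a]; l₁ = [b] = [a] <+ L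
      cases hr
      exact Or.inl (h1.subset (by simp))
  | [b', a'], [], heq =>
    obtain ⟨rfl, rfl⟩ : b = b' ∧ a = a' := by simpa using heq
    exact Or.inl (h1.subset (by simp))

/-- Lemma D (left context insertion). -/
theorem lemD_left (k : ℕ) (x₁ x₂ Y : List A) (a b : A)
    (h : SimonCong (k+1) (x₁ ++ b :: (x₂ ++ a :: Y)) (x₁ ++ b :: (x₂ ++ Y))) :
    SimonCong k (x₁ ++ (x₂ ++ a :: Y)) (x₁ ++ (x₂ ++ Y)) := by
  match k with
  | 0 => exact sc_zero _ _
  | (k' + 1) =>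
    -- a ∈ x₁ ∨ x₂ ∨ Y
    have hba : [b, a] <+ x₁ ++ b :: (x₂ ++ a :: Y) := by
      have h0 : [a] <+ a :: Y := by simp
      have h1 : [a] <+ x₂ ++ a :: Y := h0.trans (List.sublist_append_right x₂ (a :: Y))
      have h2 : [b, a] <+ b :: (x₂ ++ a :: Y) := List.cons_sublist_cons.mpr h1
      exact h2.trans (List.sublist_append_right x₁ _)
    have hba2 : [b, a] <+ x₁ ++ b :: (x₂ ++ Y) := sc_transfer h (by simp) hba
    have hamem : a ∈ x₁ ∨ a ∈ x₂ ∨ a ∈ Y := by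
      rcases pair_mem hba2 with h' | h'
      · exact Or.inl h'
      · rcases List.mem_append.mp h' with h' | h'
        · exact Or.inr (Or.inl h')
        · exact Or.inr (Or.inr h')
    refine star.mpr ⟨?_, ?_⟩
    · intro e
      simp only [List.mem_append, List.mem_cons]
      constructor
      · rintro (h' | h' | rfl | h')
        · exact Or.inl h'
        · exact Or.inr (Or.inl h')
        · rcases hamem with h' | h' | h'
          · exact Or.inl h'
          · exact Or.inr (Or.inl h')
          · exact Or.inr (Or.inr h')
        · exact Or.inr (Or.inr h')
      · rintro (h' | h' | h')
        · exact Or.inl h'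
        · exact Or.inr (Or.inl h')
        · exact Or.inr (Or.inr (Or.inr h'))
    · intro e he
      by_cases he₁ : e ∈ x₁
      · rw [sufE_append_of_mem e _ he₁, sufE_append_of_mem e _ he₁]
        have hsuf := (star.mp h).2 e (by simp [he₁])
        rw [sufE_append_of_mem e _ he₁, sufE_append_of_mem e _ he₁] at hsuf
        exact lemD_left k' (sufE e x₁) x₂ Y a b hsuf
      · rw [sufE_append_of_not_mem e _ he₁, sufE_append_of_not_mem e _ he₁]
        by_cases he₂ : e ∈ x₂
        · rw [sufE_append_of_mem e _ he₂, sufE_append_of_mem e _ he₂]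
          by_cases heb : e = b
          · subst heb
            have hsuf := (star.mp h).2 e (by simp)
            rw [sufE_append_of_not_mem e _ he₁, sufE_append_of_not_mem e _ he₁,
              sufE_cons_self, sufE_cons_self] at hsuf
            have := (star.mp hsuf).2 e (by simp [he₂])
            rw [sufE_append_of_mem e _ he₂, sufE_append_of_mem e _ he₂] at this
            exact this
          · have hsuf := (star.mp h).2 e (by simp [he₂])
            rw [sufE_append_of_not_mem e _ he₁, sufE_append_of_not_mem e _ he₁,
              sufE_cons_ne e b _ (fun hh => heb hh.symm),
              sufE_cons_ne e b _ (fun hh => heb hh.symm),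
              sufE_append_of_mem e _ he₂, sufE_append_of_mem e _ he₂] at hsuf
            exact sc_mono hsuf (Nat.le_succ _)
        · rw [sufE_append_of_not_mem e _ he₂, sufE_append_of_not_mem e _ he₂]
          by_cases hea : e = a
          · subst hea
            rw [sufE_cons_self]
            -- goal: SimonCong k' Y (sufE e Y)
            by_cases hab : e = b
            · subst hab
              have hsuf := (star.mp h).2 e (by simp)
              rw [sufE_append_of_not_mem e _ he₁, sufE_append_of_not_mem e _ he₁,
                sufE_cons_self, sufE_cons_self] at hsuf
              have := (star.mp hsuf).2 e (by simp)
              rw [sufE_append_of_not_mem e _ he₂, sufE_append_of_not_mem e _ he₂,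
                sufE_cons_self] at this
              exact this
            · have hsuf := (star.mp h).2 e (by simp)
              rw [sufE_append_of_not_mem e _ he₁, sufE_append_of_not_mem e _ he₁,
                sufE_cons_ne e b _ (fun hh => hab hh.symm),
                sufE_cons_ne e b _ (fun hh => hab hh.symm),
                sufE_append_of_not_mem e _ he₂, sufE_append_of_not_mem e _ he₂,
                sufE_cons_self] at hsuf
              exact sc_mono hsuf (Nat.le_succ _)
          · rw [sufE_cons_ne e a _ (fun hh => hea hh.symm)]
            exact sc_refl _ _
termination_by x₁.length
decreasing_by exact sufE_length_lt he₁


theorem strip_ne {a b : A} {l L : List A} (h : b :: l <+ a :: L) (hne : b ≠ a) : b :: l <+ L := by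
  rcases sublist_cons_iff.mp h with h | ⟨r, hr, _⟩
  · exact h
  · cases hr; exact absurd rfl hne

theorem sc_reverse {k : ℕ} {u v : List A} (h : SimonCong k u v) :
    SimonCong k u.reverse v.reverse := by
  intro s hs
  have hrev : ∀ (t M : List A), t <+ M.reverse ↔ t.reverse <+ M := by
    intro t M
    constructor
    · intro h'
      have := List.reverse_sublist.mpr h'  -- t.rev <+ M.rev.rev
      simpa using this
    · intro h'
      have : t.reverse.reverse <+ M.reverse := List.reverse_sublist.mpr h'
      simpa using this
  rw [hrev s u, hrev s v]
  exact h s.reverse (by simpa using hs)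

theorem lemD_right (k : ℕ) (X y₁ y₂ : List A) (a b : A)
    (h : SimonCong (k+1) (X ++ a :: (y₁ ++ b :: y₂)) (X ++ (y₁ ++ b :: y₂))) :
    SimonCong k (X ++ a :: (y₁ ++ y₂)) (X ++ (y₁ ++ y₂)) := by
  have h' := sc_reverse h
  have e1 : (X ++ a :: (y₁ ++ b :: y₂)).reverse
      = y₂.reverse ++ b :: (y₁.reverse ++ a :: X.reverse) := by
    simp
  have e2 : (X ++ (y₁ ++ b :: y₂)).reverse
      = y₂.reverse ++ b :: (y₁.reverse ++ X.reverse) := by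
    simp
  rw [e1, e2] at h'
  have hres := lemD_left k y₂.reverse y₁.reverse X.reverse a b h'
  have := sc_reverse hres
  have e3 : (y₂.reverse ++ (y₁.reverse ++ a :: X.reverse)).reverse
      = X ++ a :: (y₁ ++ y₂) := by simp
  have e4 : (y₂.reverse ++ (y₁.reverse ++ X.reverse)).reverse = X ++ (y₁ ++ y₂) := by simp
  rw [e3, e4] at this
  exact this

theorem force {p u α rest : List A} {g : A} (hg : ¬ (α ++ [g]) <+ p)
    (h : (α ++ g :: rest) <+ p ++ u) : g :: rest <+ u := by
  rcases sublist_append_iff.mp h with ⟨t₁, t₂, heq, h1, h2⟩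
  rcases List.append_eq_append_iff.mp heq with ⟨a', ht₁, hgr⟩ | ⟨c', hα', ht₂⟩
  · match a', hgr with
    | [], hgr =>
      have : t₂ = g :: rest := by simpa using hgr.symm
      rw [← this]; exact h2
    | (x :: a''), hgr =>
      obtain ⟨rfl, -⟩ : g = x ∧ rest = a'' ++ t₂ := by simpa using hgr
      have : (α ++ [g]) <+ t₁ := by
        rw [ht₁]
        exact List.append_sublist_append_left α |>.mpr (by simp)
      exact absurd (this.trans h1) hg
  · have : g :: rest <+ t₂ := by rw [ht₂]; exact List.sublist_append_right c' _
    exact this.trans h2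

theorem compose {p W α β : List A} {e : A} (h1 : ¬ (α ++ [e]) <+ p) (h2 : ¬ (e :: β) <+ W) :
    ¬ ((α ++ e :: β) <+ p ++ W) := by
  intro h
  exact h2 (force h1 h)

theorem decompose {N : ℕ} {p W : List A} {e : A}
    (h : ¬ SimonCong N (p ++ e :: W) (p ++ W)) :
    ∃ α β : List A, α <+ p ∧ β <+ W ∧ ¬ (α ++ [e]) <+ p ∧ ¬ (e :: β) <+ W ∧
      α.length + β.length + 1 ≤ N := by
  simp only [SimonCong, not_forall] at h
  obtain ⟨s, hlen, hiff⟩ := h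
  have hWsub : p ++ W <+ p ++ e :: W :=
    List.append_sublist_append_left p |>.mpr (List.sublist_cons_self e W)
  have hs1 : s <+ p ++ e :: W ∧ ¬ s <+ p ++ W := by
    by_cases h1 : s <+ p ++ W
    · exact absurd (iff_of_true (h1.trans hWsub) h1) hiff
    · by_cases h2 : s <+ p ++ e :: W
      · exact ⟨h2, h1⟩
      · exact absurd (iff_of_false h2 h1) hiff
  obtain ⟨hs, hns⟩ := hs1
  rcases sublist_append_iff.mp hs with ⟨s₁, s₂, rfl, hsp, hsW⟩
  rcases sublist_cons_iff.mp hsW with hsW | ⟨β, rfl, hβ⟩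
  · exact absurd (hsp.append hsW) hns
  · refine ⟨s₁, β, hsp, hβ, ?_, ?_, ?_⟩
    · intro hc
      refine hns ?_
      have : (s₁ ++ [e]) ++ β <+ p ++ W := hc.append hβ
      simpa using this
    · intro hc
      exact hns (hsp.append hc)
    · have := hlen; simp at this ⊢; omega

theorem dichotomy {N : ℕ} {p x₁ w₁ : List A} {c d : A} (hcd : c ≠ d)
    (h : SimonCong N (p ++ c :: x₁) (p ++ d :: w₁)) :
    SimonCong N (p ++ c :: d :: w₁) (p ++ d :: w₁) ∨
      SimonCong N (p ++ d :: d :: w₁) (p ++ d :: w₁) := by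
  by_contra hcon
  push_neg at hcon
  obtain ⟨hf1, hf2⟩ := hcon
  obtain ⟨αc, βc, hαcp, hβcW, hαc, hβc, hlc⟩ := decompose (W := d :: w₁) (e := c) hf1
  obtain ⟨αd, βd, hαdp, hβdW, hαd, hβd, hld⟩ := decompose (W := d :: w₁) (e := d) hf2
  -- βc is not a sublist of x₁
  have hβcx : ¬ βc <+ x₁ := by
    intro hx
    have hsx : (αc ++ c :: βc) <+ p ++ c :: x₁ := hαcp.append (cons_sublist_cons.mpr hx)
    have := sc_transfer h (by simp at hlc ⊢; omega) hsx
    exact compose hαc hβc this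
  -- βd = d :: βd'
  obtain ⟨βd', rfl, hβd'⟩ : ∃ r, βd = d :: r ∧ r <+ w₁ := by
    rcases sublist_cons_iff.mp hβdW with hW | ⟨r, rfl, hr⟩
    · exact absurd (cons_sublist_cons.mpr hW) hβd
    · exact ⟨r, rfl, hr⟩
  have hbranch : αc.length + (d :: βd').length + 1 ≤ N ∨ αd.length + βc.length + 1 ≤ N := by
    simp at hlc hld ⊢; omega
  rcases hbranch with hb1 | hb2
  · -- probe 1 : αd ++ d :: βd'  inside w, transfer to x
    have hp1 : (αd ++ d :: βd') <+ p ++ d :: w₁ := hαdp.append (cons_sublist_cons.mpr hβd')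
    have hp1x : (αd ++ d :: βd') <+ p ++ c :: x₁ :=
      sc_transfer (sc_symm h) (by simp at hld ⊢; omega) hp1
    have hdx : (d :: βd') <+ x₁ := strip_ne (force hαd hp1x) hcd.symm
    -- probe 2 : αc ++ c :: (d :: βd') inside x, transfer to w
    have hp2 : (αc ++ c :: d :: βd') <+ p ++ c :: x₁ := hαcp.append (cons_sublist_cons.mpr hdx)
    have hp2w : (αc ++ c :: d :: βd') <+ p ++ d :: w₁ :=
      sc_transfer h (by simp at hb1 ⊢; omega) hp2
    have hcw : (c :: d :: βd') <+ w₁ := strip_ne (force hαc hp2w) hcd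
    have : (d :: βd') <+ w₁ := (List.sublist_cons_self c _).trans hcw
    exact hβd (cons_sublist_cons.mpr this)
  · -- branch 2, cases on βc <+ d :: w₁
    rcases sublist_cons_iff.mp hβcW with hβcw₁ | ⟨r, rfl, hr⟩
    · have hp : (αd ++ d :: βc) <+ p ++ d :: w₁ := hαdp.append (cons_sublist_cons.mpr hβcw₁)
      have hpx : (αd ++ d :: βc) <+ p ++ c :: x₁ :=
        sc_transfer (sc_symm h) (by simp at hb2 ⊢; omega) hp
      have : (d :: βc) <+ x₁ := strip_ne (force hαd hpx) hcd.symm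
      exact hβcx ((List.sublist_cons_self d _).trans this)
    · have hp : (αd ++ d :: r) <+ p ++ d :: w₁ := hαdp.append (cons_sublist_cons.mpr hr)
      have hpx : (αd ++ d :: r) <+ p ++ c :: x₁ :=
        sc_transfer (sc_symm h) (by simp at hb2 ⊢; omega) hp
      have : (d :: r) <+ x₁ := strip_ne (force hαd hpx) hcd.symm
      exact hβcx this


/-- a word strictly between, adjacent to the top -/
theorem between_top {x w : List A} (h : x <+ w) (hne : x ≠ w) :
    ∃ z, x <+ z ∧ z <+ w ∧ z.length + 1 = w.length := by
  induction h with
  | slnil => exact absurd rfl hne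
  | @cons l₁ l₂ b h ih =>
    by_cases hx : l₁ = l₂
    · subst hx; exact ⟨l₁, Sublist.refl _, sublist_cons_self b _, rfl⟩
    · obtain ⟨z, h1, h2, h3⟩ := ih hx
      exact ⟨b :: z, h1.trans (sublist_cons_self b z), cons_sublist_cons.mpr h2, by simp [h3]⟩
  | @cons_cons l₁ l₂ b h ih =>
    have hx : l₁ ≠ l₂ := fun hh => hne (by rw [hh])
    obtain ⟨z, h1, h2, h3⟩ := ih hx
    exact ⟨b :: z, cons_sublist_cons.mpr h1, cons_sublist_cons.mpr h2, by simp [h3]⟩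

/-- a word strictly between, adjacent to the bottom -/
theorem between_bot {x w : List A} (h : x <+ w) (hne : x ≠ w) :
    ∃ z, x <+ z ∧ z <+ w ∧ z.length = x.length + 1 := by
  induction h with
  | slnil => exact absurd rfl hne
  | @cons l₁ l₂ b h ih =>
    by_cases hx : l₁ = l₂
    · subst hx
      exact ⟨b :: l₁, sublist_cons_self b _, Sublist.refl _, by simp⟩
    · obtain ⟨z, h1, h2, h3⟩ := ih hx
      exact ⟨z, h1, h2.trans (sublist_cons_self b _), h3⟩
  | @cons_cons l₁ l₂ b h ih =>
    have hx : l₁ ≠ l₂ := fun hh => hne (by rw [hh])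
    obtain ⟨z, h1, h2, h3⟩ := ih hx
    exact ⟨b :: z, cons_sublist_cons.mpr h1, cons_sublist_cons.mpr h2, by simp [h3]⟩

theorem one_step {z w : List A} (h : z <+ w) (hl : z.length + 1 = w.length) :
    ∃ P Q, ∃ e : A, w = P ++ e :: Q ∧ z = P ++ Q := by
  induction h with
  | slnil => simp at hl
  | @cons l₁ l₂ b h ih =>
    have : l₁.length = l₂.length := by simp at hl; omega
    have := h.eq_of_length this
    subst this
    exact ⟨[], l₁, b, rfl, rfl⟩
  | @cons_cons l₁ l₂ b h ih =>
    have : l₁.length + 1 = l₂.length := by simp at hl; omega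
    obtain ⟨P, Q, e, h1, h2⟩ := ih this
    exact ⟨b :: P, Q, e, by simp [h1], by simp [h2]⟩

theorem diverge (x w : List A) : x <+: w ∨ w <+: x ∨
    ∃ p x₁ w₁ : List A, ∃ c d : A, c ≠ d ∧ x = p ++ c :: x₁ ∧ w = p ++ d :: w₁ := by
  induction x generalizing w with
  | nil => exact Or.inl (nil_prefix)
  | cons a x' ih =>
    match w with
    | [] => exact Or.inr (Or.inl (nil_prefix))
    | b :: w' =>
      by_cases hab : a = b
      · subst hab
        rcases ih w' with h | h | ⟨p, x₁, w₁, c, d, hcd, hx, hw⟩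
        · obtain ⟨t, rfl⟩ := h; exact Or.inl ⟨t, by simp⟩
        · obtain ⟨t, rfl⟩ := h; exact Or.inr (Or.inl ⟨t, by simp⟩)
        · exact Or.inr (Or.inr ⟨a :: p, x₁, w₁, c, d, hcd, by simp [hx], by simp [hw]⟩)
      · exact Or.inr (Or.inr ⟨[], x', w', a, b, hab, by simp, by simp⟩)

theorem neighbor {N : ℕ} {x w : List A} (h : SimonCong N x w) (hne : x ≠ w) :
    ∃ z P Q, ∃ e : A, SimonCong N z w ∧
      ((z = P ++ e :: Q ∧ w = P ++ Q) ∨ (w = P ++ e :: Q ∧ z = P ++ Q)) := by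
  rcases diverge x w with hp | hp | ⟨p, x₁, w₁, c, d, hcd, rfl, rfl⟩
  · -- x prefix of w : deletion neighbor
    obtain ⟨z, h1, h2, h3⟩ := between_top hp.sublist hne
    obtain ⟨P, Q, e, hw, hz⟩ := one_step h2 h3
    refine ⟨z, P, Q, e, ?_, Or.inr ⟨hw, hz⟩⟩
    intro s hs
    exact ⟨fun hsz => hsz.trans h2, fun hsw => (sc_transfer (sc_symm h) hs hsw).trans h1⟩
  · -- w prefix of x : insertion neighbor
    obtain ⟨z, h1, h2, h3⟩ := between_bot hp.sublist (Ne.symm hne)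
    obtain ⟨P, Q, e, hz, hw⟩ := one_step h1 h3.symm
    refine ⟨z, P, Q, e, ?_, Or.inl ⟨hz, hw⟩⟩
    intro s hs
    exact ⟨fun hsz => sc_transfer h hs (hsz.trans h2), fun hsw => hsw.trans h1⟩
  · rcases dichotomy hcd h with hz | hz
    · exact ⟨p ++ c :: d :: w₁, p, d :: w₁, c, hz, Or.inl ⟨by simp, rfl⟩⟩
    · exact ⟨p ++ d :: d :: w₁, p, d :: w₁, d, hz, Or.inl ⟨by simp, rfl⟩⟩

def Good (n : ℕ) (u : List A) : Prop := ∀ v, SimonCong n u v → v = u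

theorem good_no_nbr {k : ℕ} {u v : List A} (hg : Good k u) (h : SimonCong k u v)
    (hl : v.length ≠ u.length) : False := hl (by rw [hg v h])

theorem contra_ins {k : ℕ} {R S : List A} {e : A} (hg : Good k (R ++ S))
    (hc : SimonCong k (R ++ e :: S) (R ++ S)) : False :=
  good_no_nbr hg (sc_symm hc) (by simp)

theorem key {k : ℕ} {p q : List A} {b : A} (hg : Good k (p ++ q)) :
    Good (k+1) (p ++ b :: q) := by
  intro x hx
  by_contra hne
  obtain ⟨z, P, Q, e, hzw, hshape⟩ := neighbor (sc_symm hx) hne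
  rcases hshape with ⟨hz, hw⟩ | ⟨hw, hz⟩
  · -- insertion neighbor : z = P ++ e :: Q , p ++ b :: q = P ++ Q
    rcases List.append_eq_append_iff.mp hw.symm with ⟨m, hp, hQ⟩ | ⟨m, hP, hbq⟩
    · -- p = P ++ m ∧ Q = m ++ b :: q
      subst hp hQ hz
      have hzw' : SimonCong (k+1) (P ++ e :: (m ++ b :: q)) (P ++ (m ++ b :: q)) := by
        rw [List.append_assoc] at hzw; exact hzw
      have hcon := lemD_right k P m q e b hzw'
      have hg' : Good k (P ++ (m ++ q)) := by rw [← List.append_assoc]; exact hg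
      exact contra_ins hg' hcon
    · -- P = p ++ m ∧ b :: q = m ++ Q
      rcases m with - | ⟨b', m'⟩
      · simp only [List.append_nil] at hP
        simp only [List.nil_append] at hbq
        subst hP hz
        rw [← hbq] at hw
        have hzw' : SimonCong (k+1) (P ++ e :: ([] ++ (b :: q))) (P ++ ([] ++ (b :: q))) := by
          simpa [← hbq] using hzw
        have hcon := lemD_right k P [] q e b hzw'
        have hg' : Good k (P ++ ([] ++ q)) := by simpa using hg
        exact contra_ins hg' hcon
      · obtain ⟨rfl, hq⟩ : b = b' ∧ q = m' ++ Q := by simpa using hbq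
        subst hP hq hz
        have hzw' : SimonCong (k+1) (p ++ b :: (m' ++ e :: Q)) (p ++ b :: (m' ++ Q)) := by
          have e1 : p ++ b :: m' ++ e :: Q = p ++ b :: (m' ++ e :: Q) := by simp
          have e2 : p ++ b :: m' ++ Q = p ++ b :: (m' ++ Q) := by simp
          rw [e1] at hzw
          rw [show p ++ b :: (m' ++ Q) = p ++ b :: m' ++ Q from by simp] at hzw ⊢
          exact hzw
        have hcon := lemD_left k p m' Q e b hzw'
        have hcon' : SimonCong k ((p ++ m') ++ e :: Q) ((p ++ m') ++ Q) := by
          rw [List.append_assoc, List.append_assoc]; exact hcon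
        have hg' : Good k ((p ++ m') ++ Q) := by rw [List.append_assoc]; exact hg
        exact contra_ins hg' hcon'
  · -- deletion neighbor : p ++ b :: q = P ++ e :: Q , z = P ++ Q
    rcases List.append_eq_append_iff.mp hw with ⟨m, hP, hbq⟩ | ⟨m, hp, heQ⟩
    · -- P = p ++ m ∧ b :: q = m ++ e :: Q
      rcases m with - | ⟨b', m'⟩
      · obtain ⟨rfl, rfl⟩ : b = e ∧ q = Q := by simpa using hbq
        simp only [List.append_nil] at hP
        subst hP hz
        exact good_no_nbr hg (sc_mono hzw (Nat.le_succ k)) (by simp)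
      · obtain ⟨rfl, hq⟩ : b = b' ∧ q = m' ++ e :: Q := by simpa using hbq
        subst hP hq hz
        have hzw' : SimonCong (k+1) (p ++ b :: (m' ++ e :: Q)) (p ++ b :: (m' ++ Q)) := by
          have e1 : p ++ b :: m' ++ e :: Q = p ++ b :: (m' ++ e :: Q) := by simp
          have e2 : p ++ b :: m' ++ Q = p ++ b :: (m' ++ Q) := by simp
          rw [e2] at hzw
          exact sc_symm hzw
        have hcon := lemD_left k p m' Q e b hzw'
        have hcon' : SimonCong k ((p ++ m') ++ e :: Q) ((p ++ m') ++ Q) := by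
          rw [List.append_assoc, List.append_assoc]; exact hcon
        have hg' : Good k ((p ++ m') ++ e :: Q) := by
          rw [List.append_assoc]; exact hg
        exact good_no_nbr hg' hcon' (by simp)
    · -- p = P ++ m ∧ e :: Q = m ++ b :: q
      rcases m with - | ⟨e', m'⟩
      · obtain ⟨rfl, rfl⟩ : e = b ∧ Q = q := by simpa using heQ
        simp only [List.append_nil] at hp
        subst hp hz
        exact good_no_nbr hg (sc_mono hzw (Nat.le_succ k)) (by simp)
      · obtain ⟨rfl, hQ⟩ : e = e' ∧ Q = m' ++ b :: q := by simpa using heQ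
        subst hp hQ hz
        have hzw' : SimonCong (k+1) (P ++ e :: (m' ++ b :: q)) (P ++ (m' ++ b :: q)) := by
          have h' := sc_symm hzw
          rw [show P ++ e :: m' ++ b :: q = P ++ e :: (m' ++ b :: q) from by simp] at h'
          exact h'
        have hcon := lemD_right k P m' q e b hzw'
        have hg' : Good k (P ++ e :: (m' ++ q)) := by
          rw [show P ++ e :: (m' ++ q) = P ++ e :: m' ++ q from by simp]
          exact hg
        exact good_no_nbr hg' hcon (by simp)


theorem good_card (u : List A) : Good (u.length + 1) u := by
  intro v hv
  have hu : u <+ v := sc_transfer hv (Nat.le_succ _) (List.Sublist.refl u)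
  have hlen : v.length ≤ u.length := by
    by_contra hlt
    push_neg at hlt
    have ht : (v.take (u.length+1)) <+ v := List.take_sublist _ _
    have hlen' : (v.take (u.length+1)).length = u.length + 1 := by
      rw [List.length_take]; omega
    have h2 := sc_transfer (sc_symm hv) (le_of_eq hlen') ht
    have := h2.length_le
    omega
  exact (hu.eq_of_length_le hlen).symm

theorem pieceH_good (u : List A) : Good (pieceH u) u :=
  Nat.sInf_mem (⟨u.length + 1, good_card u⟩ :
    {n : ℕ | ∀ v : List A, SimonCong n u v → v = u}.Nonempty)

theorem pieceH_le {n : ℕ} {u : List A} (h : Good n u) : pieceH u ≤ n := Nat.sInf_le h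

theorem shuffle_nil : ∀ {u w : List A}, IsShuffle u [] w → w = u
  | _, _, IsShuffle.nil => rfl
  | _, _, IsShuffle.left a h => by rw [shuffle_nil h]

theorem shuffle_cons_decomp : ∀ {u v' w : List A} {b : A}, IsShuffle u (b :: v') w →
    ∃ p q u₂, u = p ++ u₂ ∧ w = p ++ b :: q ∧ IsShuffle u₂ v' q
  | _, _, _, _, IsShuffle.right b h => ⟨[], _, _, rfl, rfl, h⟩
  | _, _, _, _, IsShuffle.left a h => by
      obtain ⟨p, q, u₂, h1, h2, h3⟩ := shuffle_cons_decomp h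
      exact ⟨a :: p, q, u₂, by simp [h1], by simp [h2], h3⟩

theorem shuffle_prepend (p : List A) {u v q : List A} (h : IsShuffle u v q) :
    IsShuffle (p ++ u) v (p ++ q) := by
  induction p with
  | nil => simpa
  | cons a p ih => exact IsShuffle.left a ih

theorem good_shuffle : ∀ (v u w : List A), IsShuffle u v w → Good (pieceH u + v.length) w := by
  intro v
  induction v with
  | nil =>
    intro u w h
    rw [shuffle_nil h]
    simpa using pieceH_good u
  | cons b v' ih =>
    intro u w h
    obtain ⟨p, q, u₂, rfl, rfl, h3⟩ := shuffle_cons_decomp h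
    have hsh : IsShuffle (p ++ u₂) v' (p ++ q) := shuffle_prepend p h3
    have hg := key (b := b) (ih (p ++ u₂) (p ++ q) hsh)
    rw [List.length_cons]
    exact hg


end SW

theorem stmt16 {A : Type*} [Fintype A] [Nonempty A] (u v w : List A)
    (hw : IsShuffle u v w) :
    pieceH w ≤ pieceH u + v.length :=
  SW.pieceH_le (SW.good_shuffle v u w hw)
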